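/- Let f ≥ 1 and L ≥ 1 be integers, and suppose 𝒟_f ≠ ∅. Then there exists a set B ⊆ V such that B intersects every path in 𝒟_f and, as real numbers, |B| ≤ (n/L)·ln(n²·(2L+2)^f) + 1. -/

import Mathlib

open scoped ENNReal

namespace DSO

variable {V : Type*}

/-- `p` is a walk from `u` to `w` in the graph with edge relation `E`:
a nonempty list of vertices, consecutive vertices joined by edges. -/
def IsWalk (E : V → V → Prop) (p : List V) (u w : V) : Prop :=
  p ≠ [] ∧ p.head? = some u ∧ p.getLast? = some w ∧ p.Chain' E

/-- The number of edges of a path given as a list of vertices. -/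
def pathLen (p : List V) : ℕ := p.length - 1

/-- Total weight of a path, for real edge weights `w`. -/
def wt (w : V → V → ℝ) : List V → ℝ
  | [] => 0
  | [_] => 0
  | a :: b :: rest => w a b + wt w (b :: rest)

/-- Total weight of a path, for `ℝ≥0∞`-valued edge weights `w`. -/
noncomputable def ewt (w : V → V → ℝ≥0∞) : List V → ℝ≥0∞
  | [] => 0
  | [_] => 0
  | a :: b :: rest => w a b + ewt w (b :: rest)

/-- A failure set `F ⊆ V ∪ E` is modelled as a set in `V ⊕ V × V`.
`IsFWalk E F p u w`: `p` is a `u`-to-`w` walk in `G ∖ F`, i.e. it uses no failed edge and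
visits no failed vertex. -/
def IsFWalk (E : V → V → Prop) (F : Set (V ⊕ V × V)) (p : List V) (u w : V) : Prop :=
  IsWalk (fun a b => E a b ∧ Sum.inr (a, b) ∉ F) p u w ∧ ∀ x ∈ p, Sum.inl x ∉ F

/-- `d_G(u, x, F)`: the minimum weight of a `u`-to-`x` path in `G ∖ F` (`⊤` if none). -/
noncomputable def fdist (E : V → V → Prop) (w : V → V → ℝ) (F : Set (V ⊕ V × V))
    (u x : V) : ℝ≥0∞ :=
  sInf ((fun p => ENNReal.ofReal (wt w p)) '' {p | IsFWalk E F p u x})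

/-- `d^L_G(u, x, F)`: the minimum weight of a `u`-to-`x` path in `G ∖ F` containing at most
`L` edges (`⊤` if none). -/
noncomputable def fdistL (E : V → V → Prop) (w : V → V → ℝ) (F : Set (V ⊕ V × V))
    (L : ℕ) (u x : V) : ℝ≥0∞ :=
  sInf ((fun p => ENNReal.ofReal (wt w p)) '' {p | IsFWalk E F p u x ∧ pathLen p ≤ L})

/-- Weighted distance in an abstract `ℝ≥0∞`-weighted digraph `(E, w)`. -/
noncomputable def ewdist (E : V → V → Prop) (w : V → V → ℝ≥0∞) (u x : V) : ℝ≥0∞ :=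
  sInf ((fun p => ewt w p) '' {p | IsWalk E p u x})

/-- `𝒟_f`: the family of all contiguous subpaths with exactly `L` edges of the (unique)
shortest paths `P_G(s,t,F)`, over all `s, t ∈ V` and all `F ⊆ V ∪ E` with `|F| ≤ f`. -/
def Dfam (E : V → V → Prop) (w : V → V → ℝ) (f L : ℕ) : Set (List V) :=
  {Q | ∃ (s t : V) (F : Set (V ⊕ V × V)) (Pst : List V),
      F.Finite ∧ F.ncard ≤ f ∧
      IsFWalk E F Pst s t ∧ ENNReal.ofReal (wt w Pst) = fdist E w F s t ∧
      Q <:+: Pst ∧ pathLen Q = L ∧ Q ≠ []}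

end DSO

namespace DSO
variable {V : Type*}

section Lists
variable {w : V → V → ℝ} {R : V → V → Prop}

lemma wt_nonneg (w : V → V → ℝ) (hw : ∀ a b, 0 ≤ w a b) : ∀ p : List V, 0 ≤ wt w p
  | [] => le_refl 0
  | [_] => le_refl 0
  | a :: b :: rest => add_nonneg (hw a b) (wt_nonneg w hw (b :: rest))

lemma wt_append (w : V → V → ℝ) : ∀ (p : List V) (x : V) (q : List V),
    wt w (p ++ x :: q) = wt w (p ++ [x]) + wt w (x :: q)
  | [], x, q => by simp [wt]
  | [a], x, q => by simp [wt, wt_append w [] x q]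
  | a :: b :: p, x, q => by
    have := wt_append w (b :: p) x q
    simp only [List.cons_append, List.append_eq, wt] at this ⊢
    rw [this]; ring

lemma chain'_iff_zip (R : V → V → Prop) : ∀ (l : List V),
    l.Chain' R ↔ ∀ ab ∈ l.zip l.tail, R ab.1 ab.2
  | [] => by simp [List.Chain']
  | [a] => by simp [List.Chain']
  | a :: b :: t => by
    have ih := chain'_iff_zip R (b :: t)
    unfold List.Chain' at ih ⊢
    rw [List.isChain_cons_cons, ih]
    constructor
    · rintro ⟨h1, h2⟩ ⟨x, y⟩ hm
      simp only [List.tail_cons, List.zip_cons_cons, List.mem_cons, Prod.mk.injEq] at hm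
      rcases hm with ⟨rfl, rfl⟩ | h
      · exact h1
      · exact h2 _ h
    · intro h
      refine ⟨h (a, b) (by simp), fun ab hm => h ab ?_⟩
      simp only [List.tail_cons, List.zip_cons_cons, List.mem_cons]
      exact Or.inr hm

lemma exists_dup_split : ∀ {p : List V}, ¬ p.Nodup →
    ∃ (x : V) (a b c : List V), p = a ++ x :: (b ++ x :: c)
  | [], h => absurd List.nodup_nil h
  | y :: l, h => by
    rw [List.nodup_cons] at h
    push_neg at h
    by_cases hy : y ∈ l
    · obtain ⟨s, t, rfl⟩ := List.append_of_mem hy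
      exact ⟨y, [], s, t, rfl⟩
    · obtain ⟨x, a, b, c, rfl⟩ := exists_dup_split (h hy)
      exact ⟨x, y :: a, b, c, rfl⟩

lemma wt_decomp (w : V → V → ℝ) {Q : List V} {u v : V} (A C : List V)
    (hu : Q.head? = some u) (hv : Q.getLast? = some v) :
    wt w (A ++ Q ++ C) = wt w (A ++ [u]) + wt w Q + wt w (v :: C) := by
  obtain ⟨Qt, rfl⟩ := List.head?_eq_some_iff.1 hu
  obtain ⟨Q', hQ'⟩ := List.getLast?_eq_some_iff.1 hv
  rw [List.append_assoc, List.cons_append, wt_append w A u (Qt ++ C)]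
  have h2 : u :: (Qt ++ C) = Q' ++ v :: C := by
    rw [← List.cons_append, hQ', List.append_assoc, List.singleton_append]
  rw [h2, wt_append w Q' v C, ← hQ']
  ring

lemma chain'_splice {A Q C Rp : List V} {u v : V}
    (hQu : Q.head? = some u) (hQv : Q.getLast? = some v)
    (hRu : Rp.head? = some u) (hRv : Rp.getLast? = some v) (hR : Rp.Chain' R)
    (h : (A ++ Q ++ C).Chain' R) : (A ++ Rp ++ C).Chain' R := by
  unfold List.Chain' at h ⊢
  rw [List.append_assoc, List.isChain_append, List.isChain_append] at h ⊢
  obtain ⟨hA, ⟨hQ, hC, hQC⟩, hAQ⟩ := h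
  refine ⟨hA, ⟨hR, hC, ?_⟩, ?_⟩
  · intro x hx y hy
    exact hQC x (by rw [hRv] at hx; rwa [hQv]) y hy
  · intro x hx y hy
    refine hAQ x hx y ?_
    rw [List.head?_append, hRu] at hy
    rw [List.head?_append, hQu]
    exact hy

lemma IsWalk.splice {E : V → V → Prop} {A Q C Rp : List V} {s t u v : V}
    (h : IsWalk E (A ++ Q ++ C) s t)
    (hQu : Q.head? = some u) (hQv : Q.getLast? = some v)
    (hR : IsWalk E Rp u v) : IsWalk E (A ++ Rp ++ C) s t := by
  obtain ⟨hne, hh, hl, hc⟩ := h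
  obtain ⟨hne', hh', hl', hc'⟩ := hR
  refine ⟨by simp [hne'], ?_, ?_, chain'_splice hQu hQv hh' hl' hc' hc⟩
  · rw [List.append_assoc, List.head?_append, List.head?_append, hh']
    rw [List.append_assoc, List.head?_append, List.head?_append, hQu] at hh
    exact hh
  · rw [List.append_assoc, List.getLast?_append, List.getLast?_append, hl']
    rw [List.append_assoc, List.getLast?_append, List.getLast?_append, hQv] at hl
    exact hl

end Lists
end DSO
namespace DSO
variable {V : Type*}

section FWalkLemmas
variable {E : V → V → Prop} {w : V → V → ℝ} {F F₀ : Set (V ⊕ V × V)}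
  {p Q : List V} {u v s t : V} {L f : ℕ}

lemma IsFWalk.mono (hFF : F₀ ⊆ F) (h : IsFWalk E F p u v) : IsFWalk E F₀ p u v := by
  obtain ⟨⟨hne, hh, hl, hc⟩, hvx⟩ := h
  exact ⟨⟨hne, hh, hl, hc.imp fun a b hab => ⟨hab.1, fun hm => hab.2 (hFF hm)⟩⟩,
    fun x hx hm => hvx x hx (hFF hm)⟩

lemma fdist_le (h : IsFWalk E F p u v) :
    fdist E w F u v ≤ ENNReal.ofReal (wt w p) :=
  sInf_le ⟨p, h, rfl⟩

lemma fdistL_le (h : IsFWalk E F p u v) (hl : pathLen p ≤ L) :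
    fdistL E w F L u v ≤ ENNReal.ofReal (wt w p) :=
  sInf_le ⟨p, ⟨h, hl⟩, rfl⟩

lemma fdistL_mono (hFF : F₀ ⊆ F) : fdistL E w F₀ L u v ≤ fdistL E w F L u v :=
  sInf_le_sInf (Set.image_mono fun p hp => ⟨hp.1.mono hFF, hp.2⟩)

/-- The set of feasible `≤ L`-edge walks. -/
def FeasL (E : V → V → Prop) (F : Set (V ⊕ V × V)) (L : ℕ) (u v : V) : Set (List V) :=
  {p | IsFWalk E F p u v ∧ pathLen p ≤ L}

lemma feasL_length_le (hp : p ∈ FeasL E F L u v) : p.length ≤ L + 1 := by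
  have h1 : p ≠ [] := hp.1.1.1
  have h2 : p.length - 1 ≤ L := hp.2
  have : p.length ≠ 0 := fun h => h1 (List.length_eq_zero_iff.1 h)
  omega

lemma feasL_finite [Finite V] : (FeasL E F L u v).Finite :=
  (List.finite_length_le V (L + 1)).subset fun _ hp => feasL_length_le hp

lemma fdistL_eq_sInf : fdistL E w F L u v
    = sInf ((fun p => ENNReal.ofReal (wt w p)) '' FeasL E F L u v) := rfl

lemma exists_achL [Finite V] (hne : (FeasL E F L u v).Nonempty) :
    ∃ p ∈ FeasL E F L u v, ENNReal.ofReal (wt w p) = fdistL (w := w) E F L u v := by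
  have h1 : fdistL (w := w) E F L u v ∈ (fun p => ENNReal.ofReal (wt w p)) '' FeasL E F L u v := by
    rw [fdistL_eq_sInf]
    exact Set.Nonempty.csInf_mem (hne.image _) (feasL_finite.image _)
  obtain ⟨p, hp, hfp⟩ := h1
  exact ⟨p, hp, hfp⟩

lemma IsFWalk.splice {A C Rp : List V}
    (h : IsFWalk E F (A ++ Q ++ C) s t)
    (hQu : Q.head? = some u) (hQv : Q.getLast? = some v)
    (hR : IsFWalk E F Rp u v) : IsFWalk E F (A ++ Rp ++ C) s t := by
  obtain ⟨hw1, hv1⟩ := h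
  obtain ⟨hw2, hv2⟩ := hR
  refine ⟨hw1.splice hQu hQv hw2, ?_⟩
  intro x hx
  simp only [List.append_assoc, List.mem_append] at hx
  rcases hx with h | h | h
  · exact hv1 x (by simp [h])
  · exact hv2 x h
  · exact hv1 x (by simp [h])

lemma IsFWalk.infix (h : IsFWalk E F p s t) (hQ : Q <:+: p) (hne : Q ≠ []) :
    ∃ u v, Q.head? = some u ∧ Q.getLast? = some v ∧ IsFWalk E F Q u v := by
  obtain ⟨⟨hpne, hh, hl, hc⟩, hvx⟩ := h
  obtain ⟨u, hu⟩ : ∃ u, Q.head? = some u := by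
    cases Q with
    | nil => exact absurd rfl hne
    | cons a l => exact ⟨a, rfl⟩
  obtain ⟨v, hv⟩ : ∃ v, Q.getLast? = some v :=
    ⟨Q.getLast hne, List.getLast?_eq_getLast hne⟩
  exact ⟨u, v, hu, hv, ⟨hne, hu, hv, hc.infix hQ⟩, fun x hx => hvx x (hQ.subset hx)⟩

lemma Dfam_spec (hw : ∀ a b, 0 ≤ w a b) {Q : List V} (hQ : Q ∈ Dfam E w f L) :
    ∃ (u v : V) (F : Set (V ⊕ V × V)), Q.head? = some u ∧ Q.getLast? = some v ∧
      F.Finite ∧ F.ncard ≤ f ∧ Q ∈ FeasL E F L u v ∧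
      ENNReal.ofReal (wt w Q) = fdistL (w := w) E F L u v := by
  obtain ⟨s, t, F, Pst, hFfin, hFc, hPw, hPopt, hinf, hlen, hne⟩ := hQ
  obtain ⟨u, v, hu, hv, hQw⟩ := hPw.infix hinf hne
  refine ⟨u, v, F, hu, hv, hFfin, hFc, ⟨hQw, hlen.le⟩,
    le_antisymm ?_ (fdistL_le hQw hlen.le)⟩
  refine le_sInf ?_
  rintro b ⟨Rp, ⟨hRw, hRl⟩, rfl⟩
  by_contra hlt
  push_neg at hlt
  have hR0 : 0 ≤ wt w Rp := wt_nonneg w hw Rp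
  have hwlt : wt w Rp < wt w Q := by
    by_contra hge
    push_neg at hge
    exact absurd hlt (not_lt.2 (ENNReal.ofReal_le_ofReal hge))
  obtain ⟨A, C, hP⟩ := hinf
  rw [← hP] at hPw hPopt
  have hSw : IsFWalk E F (A ++ Rp ++ C) s t := hPw.splice hu hv hRw
  have hwS : wt w (A ++ Rp ++ C) < wt w (A ++ Q ++ C) := by
    rw [wt_decomp w A C hu hv, wt_decomp w A C (u := u) (v := v) ?_ ?_]
    · linarith
    · exact hRw.1.2.1
    · exact hRw.1.2.2.1
  have h1 : fdist E w F s t ≤ ENNReal.ofReal (wt w (A ++ Rp ++ C)) := fdist_le hSw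
  have h2 : ENNReal.ofReal (wt w (A ++ Rp ++ C)) < ENNReal.ofReal (wt w (A ++ Q ++ C)) := by
    rw [ENNReal.ofReal_lt_ofReal_iff]
    · exact hwS
    · exact lt_of_le_of_lt (wt_nonneg w hw _) hwS
  rw [← hPopt] at h1
  exact absurd (lt_of_le_of_lt h1 h2) (lt_irrefl _)

lemma dedup_step {R : V → V → Prop} (w : V → V → ℝ) (hw : ∀ a b, 0 ≤ w a b)
    (hnd : ¬ p.Nodup) (hh : p.head? = some u) (hl : p.getLast? = some v) (hc : p.Chain' R) :
    ∃ p' : List V, p'.length < p.length ∧ (∀ x ∈ p', x ∈ p) ∧ p' ≠ [] ∧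
      p'.head? = some u ∧ p'.getLast? = some v ∧ p'.Chain' R ∧ wt w p' ≤ wt w p := by
  obtain ⟨x, a, b, c, rfl⟩ := exists_dup_split hnd
  refine ⟨a ++ x :: c, by simp, ?_, by simp, ?_, ?_, ?_, ?_⟩
  · intro y hy
    simp only [List.mem_append, List.mem_cons] at hy ⊢
    tauto
  · rw [List.head?_append] at hh ⊢
    simpa using hh
  · obtain ⟨z, hz⟩ : ∃ z, (x :: c).getLast? = some z :=
      ⟨(x :: c).getLast (by simp), List.getLast?_eq_getLast (by simp)⟩
    rw [show a ++ x :: (b ++ x :: c) = (a ++ x :: b) ++ (x :: c) by simp] at hl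
    rw [List.getLast?_append, hz] at hl
    rw [List.getLast?_append, hz]
    exact hl
  · unfold List.Chain' at hc
    rw [show a ++ x :: (b ++ x :: c) = a ++ ((x :: b) ++ (x :: c)) by simp,
      List.isChain_append, List.isChain_append] at hc
    obtain ⟨hA, ⟨hB, hC, hBC⟩, hAB⟩ := hc
    unfold List.Chain'
    rw [List.isChain_append]
    refine ⟨hA, hC, ?_⟩
    intro y hy z hz
    have := hAB y hy
    simp only [List.head?_append, List.head?_cons] at this hz ⊢
    simp only [Option.or_some] at this hz
    cases hz
    exact this x rfl
  · rw [wt_append w a x (b ++ x :: c), wt_append w a x c,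
      show (x : V) :: (b ++ x :: c) = (x :: b) ++ x :: c by simp,
      wt_append w (x :: b) x c]
    have := wt_nonneg w hw ((x :: b) ++ [x])
    linarith

end FWalkLemmas
end DSO
namespace DSO
section Counting
variable {V : Type*} [DecidableEq V]
variable {E : V → V → Prop} {w : V → V → ℝ} {F F₀ : Set (V ⊕ V × V)}
  {p p₀ Q : List V} {u v : V} {L f : ℕ}

/-- The vertices and edges of a path, as elements of `V ⊕ V × V`. -/
def pelemsF (p : List V) : Finset (V ⊕ V × V) :=
  (p.map Sum.inl).toFinset ∪ ((p.zip p.tail).map Sum.inr).toFinset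

lemma mem_pelemsF {e : V ⊕ V × V} : e ∈ pelemsF p ↔
    (∃ x ∈ p, e = Sum.inl x) ∨ ∃ ab ∈ p.zip p.tail, e = Sum.inr ab := by
  simp [pelemsF, eq_comm]

lemma pelemsF_card_le : (pelemsF p).card ≤ p.length + (p.length - 1) := by
  refine le_trans (Finset.card_union_le _ _) (add_le_add ?_ ?_)
  · exact le_trans (List.toFinset_card_le _) (by simp)
  · refine le_trans (List.toFinset_card_le _) ?_
    simp [List.length_zip]

/-- The set of optimal feasible `≤ L`-edge walks (a singleton or empty, under uniqueness). -/
def AchL (E : V → V → Prop) (w : V → V → ℝ) (F : Set (V ⊕ V × V)) (L : ℕ) (u v : V) :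
    Set (List V) :=
  {p | p ∈ FeasL E F L u v ∧ ENNReal.ofReal (wt w p) = fdistL E w F L u v}

lemma AchL_nodup (hw : ∀ a b, 0 ≤ w a b)
    (huniqL : ∀ (u x : V) (F : Set (V ⊕ V × V)), F.Finite → F.ncard ≤ f → ∀ L' : ℕ,
      ∀ p q : List V,
        IsFWalk E F p u x → pathLen p ≤ L' → ENNReal.ofReal (wt w p) = fdistL E w F L' u x →
        IsFWalk E F q u x → pathLen q ≤ L' → ENNReal.ofReal (wt w q) = fdistL E w F L' u x →
        p = q)
    (hFf : F.Finite) (hFc : F.ncard ≤ f)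
    (hp : p ∈ AchL E w F L u v) : p.Nodup := by
  by_contra hnd
  obtain ⟨⟨⟨⟨hne, hh, hl, hc⟩, hvx⟩, hlen⟩, hopt⟩ := hp
  obtain ⟨p', hlt, hsub, hne', hh', hl', hc', hwle⟩ := dedup_step w hw hnd hh hl hc
  have hp'w : IsFWalk E F p' u v := ⟨⟨hne', hh', hl', hc'⟩, fun x hx => hvx x (hsub x hx)⟩
  have hp'len : pathLen p' ≤ L := by
    unfold pathLen at hlen ⊢; omega
  have h1 : fdistL E w F L u v ≤ ENNReal.ofReal (wt w p') := fdistL_le hp'w hp'len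
  have h2 : ENNReal.ofReal (wt w p') ≤ fdistL E w F L u v := by
    rw [← hopt]; exact ENNReal.ofReal_le_ofReal hwle
  have heq := huniqL u v F hFf hFc L p p' ⟨⟨hne, hh, hl, hc⟩, hvx⟩ hlen hopt
    hp'w hp'len (le_antisymm h2 h1)
  rw [heq] at hlt
  exact absurd hlt (lt_irrefl _)

lemma ncard_biUnion_le {α β : Type*} (s : Finset α) (T : α → Set β) :
    (⋃ a ∈ (s : Set α), T a).ncard ≤ ∑ a ∈ s, (T a).ncard := by
  classical
  induction s using Finset.induction with
  | empty => simp
  | insert a s ha ih =>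
    rw [Finset.coe_insert, Set.biUnion_insert, Finset.sum_insert ha]
    exact le_trans (Set.ncard_union_le _ _) (add_le_add_right ih _)

lemma count_lemma [Fintype V] (hw : ∀ a b, 0 ≤ w a b)
    (huniqL : ∀ (u x : V) (F : Set (V ⊕ V × V)), F.Finite → F.ncard ≤ f → ∀ L' : ℕ,
      ∀ p q : List V,
        IsFWalk E F p u x → pathLen p ≤ L' → ENNReal.ofReal (wt w p) = fdistL E w F L' u x →
        IsFWalk E F q u x → pathLen q ≤ L' → ENNReal.ofReal (wt w q) = fdistL E w F L' u x →
        p = q)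
    (u v : V) :
    ∀ (k : ℕ) (F₀ : Set (V ⊕ V × V)), F₀.Finite → F₀.ncard + k ≤ f →
      ∀ p₀ ∈ AchL E w F₀ L u v,
      ({p | ∃ F, F.Finite ∧ F₀ ⊆ F ∧ F.ncard ≤ F₀.ncard + k ∧ p ∈ AchL E w F L u v}).ncard
        ≤ (2 * L + 2) ^ k := by
  intro k
  induction k with
  | zero =>
    intro F₀ hF₀f hkf p₀ hp₀
    have hsub : {p | ∃ F, F.Finite ∧ F₀ ⊆ F ∧ F.ncard ≤ F₀.ncard + 0 ∧ p ∈ AchL E w F L u v}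
        ⊆ {p₀} := by
      rintro p ⟨F, hFf, hsubF, hcF, hpA⟩
      have hFeq : F₀ = F :=
        Set.eq_of_subset_of_ncard_le hsubF (by simpa using hcF) hFf
      subst hFeq
      have := huniqL u v F₀ hF₀f (by omega) L p p₀ hpA.1.1 hpA.1.2 hpA.2
        hp₀.1.1 hp₀.1.2 hp₀.2
      simp [this]
    simpa using Set.ncard_le_ncard hsub (Set.finite_singleton p₀)
  | succ k ih =>
    intro F₀ hF₀f hkf p₀ hp₀
    obtain ⟨⟨⟨⟨hne₀, hh₀, hl₀, hc₀⟩, hvx₀⟩, hlen₀⟩, hopt₀⟩ := hp₀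
    set T : (V ⊕ V × V) → Set (List V) := fun e =>
      {p | ∃ F, F.Finite ∧ insert e F₀ ⊆ F ∧ F.ncard ≤ (insert e F₀).ncard + k ∧
        p ∈ AchL E w F L u v} with hT
    have hTfin : ∀ e, (T e).Finite := by
      intro e
      refine (feasL_finite (E := E) (F := insert e F₀) (L := L) (u := u) (v := v)).subset ?_
      rintro p ⟨F, hFf, hsubF, hcF, hpA⟩
      exact ⟨hpA.1.1.mono hsubF, hpA.1.2⟩
    have hTb : ∀ e, (T e).ncard ≤ (2 * L + 2) ^ k := by
      intro e
      by_cases hA : (AchL E w (insert e F₀) L u v).Nonempty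
      · obtain ⟨p₁, hp₁⟩ := hA
        refine ih (insert e F₀) (hF₀f.insert e) ?_ p₁ hp₁
        have := Set.ncard_insert_le e F₀
        omega
      · have hTe : T e = ∅ := by
          ext p
          simp only [Set.mem_empty_iff_false, iff_false, hT, Set.mem_setOf_eq]
          rintro ⟨F, hFf, hsubF, hcF, hpA⟩
          have hfeas : p ∈ FeasL E (insert e F₀) L u v :=
            ⟨hpA.1.1.mono hsubF, hpA.1.2⟩
          obtain ⟨q, hq, hqopt⟩ := exists_achL (w := w) ⟨p, hfeas⟩
          exact hA ⟨q, hq, hqopt⟩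
        simp [hTe]
    have hsub : {p | ∃ F, F.Finite ∧ F₀ ⊆ F ∧ F.ncard ≤ F₀.ncard + (k + 1) ∧
        p ∈ AchL E w F L u v} ⊆ insert p₀ (⋃ e ∈ (pelemsF p₀ : Set (V ⊕ V × V)), T e) := by
      rintro p ⟨F, hFf, hsubF, hcF, hpA⟩
      by_cases hdisj : ∀ e ∈ pelemsF p₀, e ∉ F
      · have hc₀F : p₀.Chain' (fun a b => E a b ∧ Sum.inr (a, b) ∉ F) := by
          rw [chain'_iff_zip] at hc₀ ⊢
          rintro ⟨a, b⟩ hab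
          exact ⟨(hc₀ _ hab).1, hdisj _ (mem_pelemsF.2 (Or.inr ⟨(a, b), hab, rfl⟩))⟩
        have hp₀F : IsFWalk E F p₀ u v := ⟨⟨hne₀, hh₀, hl₀, hc₀F⟩,
          fun x hx => hdisj _ (mem_pelemsF.2 (Or.inl ⟨x, hx, rfl⟩))⟩
        have heq : ENNReal.ofReal (wt w p₀) = fdistL E w F L u v := by
          refine le_antisymm ?_ (fdistL_le hp₀F hlen₀)
          rw [hopt₀]
          exact fdistL_mono hsubF
        exact Or.inl (huniqL u v F hFf (by omega) L p p₀ hpA.1.1 hpA.1.2 hpA.2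
          hp₀F hlen₀ heq)
      · push_neg at hdisj
        obtain ⟨e, he, heF⟩ := hdisj
        have heF₀ : e ∉ F₀ := by
          rcases mem_pelemsF.1 he with ⟨x, hx, rfl⟩ | ⟨⟨a, b⟩, hab, rfl⟩
          · exact hvx₀ x hx
          · exact ((chain'_iff_zip _ p₀).1 hc₀ (a, b) hab).2
        refine Or.inr (Set.mem_biUnion he ⟨F, hFf, Set.insert_subset heF hsubF, ?_, hpA⟩)
        rw [Set.ncard_insert_of_notMem heF₀ hF₀f]
        omega
    have hp₀len : p₀.length ≤ L + 1 := feasL_length_le ⟨⟨⟨hne₀, hh₀, hl₀, hc₀⟩, hvx₀⟩, hlen₀⟩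
    have hcard : (pelemsF p₀).card ≤ 2 * L + 1 := by
      have := pelemsF_card_le (p := p₀)
      omega
    calc ({p | ∃ F, F.Finite ∧ F₀ ⊆ F ∧ F.ncard ≤ F₀.ncard + (k + 1) ∧
          p ∈ AchL E w F L u v}).ncard
        ≤ (insert p₀ (⋃ e ∈ (pelemsF p₀ : Set (V ⊕ V × V)), T e)).ncard := by
          refine Set.ncard_le_ncard hsub ?_
          exact Set.Finite.insert p₀ ((pelemsF p₀).finite_toSet.biUnion fun e _ => hTfin e)
      _ ≤ (⋃ e ∈ (pelemsF p₀ : Set (V ⊕ V × V)), T e).ncard + 1 := Set.ncard_insert_le _ _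
      _ ≤ (∑ e ∈ pelemsF p₀, (T e).ncard) + 1 := by
          exact add_le_add_left (ncard_biUnion_le _ _) 1
      _ ≤ (pelemsF p₀).card * ((2 * L + 2) ^ k) + 1 := by
          refine add_le_add_left ?_ 1
          refine le_trans (Finset.sum_le_card_nsmul _ _ _ fun e _ => hTb e) ?_
          simp [smul_eq_mul]
      _ ≤ (2 * L + 2) ^ (k + 1) := by
          have h1 : 1 ≤ (2 * L + 2) ^ k := Nat.one_le_pow _ _ (by omega)
          have h2 : (pelemsF p₀).card * ((2 * L + 2) ^ k) ≤ (2 * L + 1) * ((2 * L + 2) ^ k) :=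
            Nat.mul_le_mul_right _ hcard
          have h3 : (2 * L + 2) ^ (k + 1) = (2 * L + 1) * (2 * L + 2) ^ k + (2 * L + 2) ^ k := by
            rw [pow_succ]; ring
          omega

end Counting
end DSO
namespace DSO
section DfamLemmas
variable {V : Type*} [Fintype V] [DecidableEq V]
variable {E : V → V → Prop} {w : V → V → ℝ} {L f : ℕ}

lemma Dfam_finite (hw : ∀ a b, 0 ≤ w a b) : (Dfam E w f L).Finite := by
  refine (List.finite_length_le V (L + 1)).subset ?_
  intro Q hQ
  obtain ⟨u, v, F, _, _, _, _, hfeas, _⟩ := Dfam_spec hw hQ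
  exact feasL_length_le hfeas

lemma Dfam_length (hw : ∀ a b, 0 ≤ w a b) {Q : List V} (hQ : Q ∈ Dfam E w f L) :
    Q.length = L + 1 := by
  obtain ⟨s, t, F, Pst, _, _, _, _, _, hlen, hne⟩ := hQ
  have : Q.length ≠ 0 := fun h => hne (List.length_eq_zero_iff.1 h)
  unfold pathLen at hlen
  omega

lemma Dfam_nodup (hw : ∀ a b, 0 ≤ w a b)
    (huniqL : ∀ (u x : V) (F : Set (V ⊕ V × V)), F.Finite → F.ncard ≤ f → ∀ L' : ℕ,
      ∀ p q : List V,
        IsFWalk E F p u x → pathLen p ≤ L' → ENNReal.ofReal (wt w p) = fdistL E w F L' u x →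
        IsFWalk E F q u x → pathLen q ≤ L' → ENNReal.ofReal (wt w q) = fdistL E w F L' u x →
        p = q)
    {Q : List V} (hQ : Q ∈ Dfam E w f L) : Q.Nodup := by
  obtain ⟨u, v, F, _, _, hFf, hFc, hfeas, hopt⟩ := Dfam_spec hw hQ
  exact AchL_nodup hw huniqL hFf hFc ⟨hfeas, hopt⟩

lemma Dfam_ncard (hw : ∀ a b, 0 ≤ w a b)
    (huniqL : ∀ (u x : V) (F : Set (V ⊕ V × V)), F.Finite → F.ncard ≤ f → ∀ L' : ℕ,
      ∀ p q : List V,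
        IsFWalk E F p u x → pathLen p ≤ L' → ENNReal.ofReal (wt w p) = fdistL E w F L' u x →
        IsFWalk E F q u x → pathLen q ≤ L' → ENNReal.ofReal (wt w q) = fdistL E w F L' u x →
        p = q) :
    (Dfam E w f L).ncard ≤ Fintype.card V * Fintype.card V * (2 * L + 2) ^ f := by
  classical
  set S : V × V → Set (List V) := fun uv =>
    {p | ∃ F : Set (V ⊕ V × V), F.Finite ∧ F.ncard ≤ f ∧ p ∈ AchL E w F L uv.1 uv.2} with hS
  have hSfin : ∀ uv, (S uv).Finite := by
    intro uv
    refine (feasL_finite (E := E) (F := ∅) (L := L) (u := uv.1) (v := uv.2)).subset ?_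
    rintro p ⟨F, hFf, _, hpA⟩
    exact ⟨hpA.1.1.mono (Set.empty_subset F), hpA.1.2⟩
  have hSb : ∀ uv, (S uv).ncard ≤ (2 * L + 2) ^ f := by
    intro uv
    by_cases hA : (AchL E w (∅ : Set (V ⊕ V × V)) L uv.1 uv.2).Nonempty
    · obtain ⟨p₀, hp₀⟩ := hA
      have := count_lemma hw huniqL uv.1 uv.2 f ∅ Set.finite_empty
        (by simp) p₀ hp₀
      simpa using this
    · have hSe : S uv = ∅ := by
        ext p
        simp only [Set.mem_empty_iff_false, iff_false, hS, Set.mem_setOf_eq]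
        rintro ⟨F, hFf, _, hpA⟩
        have hfeas : p ∈ FeasL E (∅ : Set (V ⊕ V × V)) L uv.1 uv.2 :=
          ⟨hpA.1.1.mono (Set.empty_subset F), hpA.1.2⟩
        obtain ⟨q, hq, hqopt⟩ := exists_achL (w := w) ⟨p, hfeas⟩
        exact hA ⟨q, hq, hqopt⟩
      simp [hSe]
  have hsub : Dfam E w f L ⊆ ⋃ uv ∈ ((Finset.univ : Finset (V × V)) : Set (V × V)), S uv := by
    intro Q hQ
    obtain ⟨u, v, F, _, _, hFf, hFc, hfeas, hopt⟩ := Dfam_spec hw hQ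
    refine Set.mem_biUnion (Finset.mem_coe.2 (Finset.mem_univ (u, v))) ?_
    exact ⟨F, hFf, hFc, hfeas, hopt⟩
  calc (Dfam E w f L).ncard
      ≤ (⋃ uv ∈ ((Finset.univ : Finset (V × V)) : Set (V × V)), S uv).ncard := by
        refine Set.ncard_le_ncard hsub ?_
        exact Set.Finite.biUnion (Finset.finite_toSet _) fun uv _ => hSfin uv
    _ ≤ ∑ uv ∈ (Finset.univ : Finset (V × V)), (S uv).ncard := ncard_biUnion_le _ _
    _ ≤ (Finset.univ : Finset (V × V)).card * (2 * L + 2) ^ f := by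
        refine le_trans (Finset.sum_le_card_nsmul _ _ _ fun uv _ => hSb uv) ?_
        simp [smul_eq_mul]
    _ = Fintype.card V * Fintype.card V * (2 * L + 2) ^ f := by
        rw [Finset.card_univ, Fintype.card_prod]

end DfamLemmas
end DSO
namespace DSO

lemma greedy_cover {V : Type*} [Fintype V] [DecidableEq V] (L : ℕ) :
    ∀ (m : ℕ) (𝒬 : Finset (List V)), 𝒬.card ≤ m →
      (∀ Q ∈ 𝒬, L + 1 ≤ Q.toFinset.card) →
      ∃ B : Finset V, (∀ Q ∈ 𝒬, ∃ x ∈ Q, x ∈ B) ∧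
        (𝒬 = ∅ ∨ (B.card : ℝ) ≤ (Fintype.card V : ℝ) / ((L : ℝ) + 1) *
          Real.log (𝒬.card : ℝ) + 1) := by
  intro m
  induction m with
  | zero =>
    intro 𝒬 hc _
    exact ⟨∅, by simp [Finset.card_eq_zero.1 (Nat.le_zero.1 hc)],
      Or.inl (Finset.card_eq_zero.1 (Nat.le_zero.1 hc))⟩
  | succ m ih =>
    intro 𝒬 hc hQ
    by_cases hemp : 𝒬 = ∅
    · exact ⟨∅, by simp [hemp], Or.inl hemp⟩
    have h𝒬ne : 𝒬.Nonempty := Finset.nonempty_of_ne_empty hemp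
    have hM1 : 1 ≤ 𝒬.card := Finset.card_pos.2 h𝒬ne
    have hn0 : 0 < Fintype.card V := by
      obtain ⟨Q, hQm⟩ := h𝒬ne
      have h1 := hQ Q hQm
      have h2 : Q.toFinset.card ≤ Fintype.card V := Finset.card_le_univ _
      omega
    set n := Fintype.card V with hn
    classical
    set deg : V → ℕ := fun v => (𝒬.filter (fun Q => v ∈ Q)).card with hdeg
    have hinner : ∀ Q : List V, (∑ v : V, if v ∈ Q then 1 else 0) = Q.toFinset.card := by
      intro Q
      rw [← Finset.card_filter]
      congr 1
      ext x
      simp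
    have hsum : ∑ v : V, deg v = ∑ Q ∈ 𝒬, Q.toFinset.card := by
      simp only [hdeg, Finset.card_filter]
      rw [Finset.sum_comm]
      exact Finset.sum_congr rfl fun Q _ => hinner Q
    have hsum2 : (L + 1) * 𝒬.card ≤ ∑ v : V, deg v := by
      rw [hsum]
      simpa [smul_eq_mul, mul_comm] using Finset.card_nsmul_le_sum 𝒬 _ (L + 1) hQ
    obtain ⟨v, _, hv⟩ : ∃ v ∈ (Finset.univ : Finset V), (L + 1) * 𝒬.card ≤ n * deg v := by
      by_contra hcon
      push_neg at hcon
      have h1 : ∑ _v : V, (L + 1) * 𝒬.card ≤ ∑ v : V, n * deg v := by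
        have e1 : ∑ _v : V, (L + 1) * 𝒬.card = n * ((L + 1) * 𝒬.card) := by
          rw [Finset.sum_const, smul_eq_mul, Finset.card_univ]
        have e2 : ∑ v : V, n * deg v = n * ∑ v : V, deg v := (Finset.mul_sum _ _ _).symm
        rw [e1, e2]
        exact Nat.mul_le_mul_left n hsum2
      obtain ⟨v', hvm, hvle⟩ := Finset.exists_le_of_sum_le
        (Finset.univ_nonempty_iff.2 (Fintype.card_pos_iff.1 hn0)) h1
      exact absurd hvle (not_le.2 (hcon v' hvm))
    have hdegpos : 1 ≤ deg v := by
      rcases Nat.eq_zero_or_pos (deg v) with h0 | h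
      · rw [h0, Nat.mul_zero, Nat.le_zero, Nat.mul_eq_zero] at hv
        rcases hv with h | h <;> omega
      · exact h
    set 𝒬' := 𝒬.filter (fun Q => v ∉ Q) with h𝒬'
    have hcard' : 𝒬'.card + deg v = 𝒬.card := by
      rw [h𝒬', hdeg]
      rw [add_comm]
      exact Finset.card_filter_add_card_filter_not (fun Q => v ∈ Q)
    have hQ' : ∀ Q ∈ 𝒬', L + 1 ≤ Q.toFinset.card := fun Q hq =>
      hQ Q (Finset.mem_filter.1 hq).1
    by_cases h'emp : 𝒬' = ∅
    · -- every Q contains v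
      refine ⟨{v}, ?_, Or.inr ?_⟩
      · intro Q hQm
        refine ⟨v, ?_, Finset.mem_singleton_self v⟩
        by_contra hvQ
        have : Q ∈ 𝒬' := Finset.mem_filter.2 ⟨hQm, hvQ⟩
        simp [h'emp] at this
      · have hlog : (0 : ℝ) ≤ Real.log (𝒬.card : ℝ) :=
          Real.log_nonneg (by exact_mod_cast hM1)
        have hfrac : (0 : ℝ) ≤ (n : ℝ) / ((L : ℝ) + 1) := by positivity
        have : (0:ℝ) ≤ (n : ℝ) / ((L : ℝ) + 1) * Real.log (𝒬.card : ℝ) :=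
          mul_nonneg hfrac hlog
        simp only [Finset.card_singleton]
        push_cast
        linarith
    · -- recurse
      have h'lt : 𝒬'.card ≤ m := by
        have h1 : 𝒬'.card + 1 ≤ 𝒬.card := by
          calc 𝒬'.card + 1 ≤ 𝒬'.card + deg v := Nat.add_le_add_left hdegpos _
            _ = 𝒬.card := hcard'
        omega
      obtain ⟨B', hB'hit, hB'⟩ := ih 𝒬' h'lt hQ'
      rcases hB' with h | hB'bound
      · exact absurd h h'emp
      refine ⟨insert v B', ?_, Or.inr ?_⟩
      · intro Q hQm
        by_cases hvQ : v ∈ Q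
        · exact ⟨v, hvQ, Finset.mem_insert_self v B'⟩
        · obtain ⟨x, hx1, hx2⟩ := hB'hit Q (Finset.mem_filter.2 ⟨hQm, hvQ⟩)
          exact ⟨x, hx1, Finset.mem_insert_of_mem hx2⟩
      -- the analytic estimate
      have hm'1 : 1 ≤ 𝒬'.card := Finset.card_pos.2 (Finset.nonempty_of_ne_empty h'emp)
      set M : ℝ := (𝒬.card : ℝ) with hMdef
      set m' : ℝ := (𝒬'.card : ℝ) with hm'def
      set nR : ℝ := (n : ℝ) with hnRdef
      set a : ℝ := (L : ℝ) + 1 with hadef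
      have hMpos : (1:ℝ) ≤ M := by rw [hMdef]; exact_mod_cast hM1
      have hm'pos : (1:ℝ) ≤ m' := by rw [hm'def]; exact_mod_cast hm'1
      have hnpos : (0:ℝ) < nR := by rw [hnRdef]; exact_mod_cast hn0
      have hapos : (0:ℝ) < a := by positivity
      have hkey : nR * m' + a * M ≤ nR * M := by
        have h1 : ((L + 1) * 𝒬.card : ℕ) ≤ (n * deg v : ℕ) := hv
        have h2 : (𝒬'.card + deg v : ℕ) = 𝒬.card := hcard'
        have h1' : a * M ≤ nR * ((deg v : ℕ) : ℝ) := by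
          rw [hadef, hMdef, hnRdef]
          push_cast
          exact_mod_cast (by exact_mod_cast h1 : ((L + 1) * 𝒬.card : ℝ) ≤ (n * deg v : ℝ))
        have h2' : m' + ((deg v : ℕ) : ℝ) = M := by
          rw [hm'def, hMdef]
          exact_mod_cast h2
        have h2'' : nR * m' + nR * ((deg v : ℕ) : ℝ) = nR * M := by
          rw [← h2']; ring
        linarith
      have hna : a < nR := by nlinarith [hkey, hMpos, hm'pos, hnpos, hapos]
      set x : ℝ := a / nR with hxdef
      have hx0 : 0 < x := div_pos hapos hnpos
      have hx1 : x < 1 := (div_lt_one hnpos).2 hna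
      have hexp1 : 1 - x ≤ Real.exp (-x) := by
        have := Real.add_one_le_exp (-x)
        linarith
      have hexp2 : Real.exp x * (1 - x) ≤ 1 := by
        have h := mul_le_mul_of_nonneg_left hexp1 (Real.exp_pos x).le
        rwa [← Real.exp_add, add_neg_cancel, Real.exp_zero] at h
      have h3 : m' ≤ M * (1 - x) := by
        have hMx : M * (1 - x) * nR = M * (nR - a) := by
          have hh : (1 - a / nR) * nR = nR - a := by
            field_simp
          rw [hxdef]
          calc M * (1 - a / nR) * nR = M * ((1 - a / nR) * nR) := by ring
            _ = M * (nR - a) := by rw [hh]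
        have : m' * nR ≤ M * (1 - x) * nR := by
          rw [hMx]
          nlinarith [hkey]
        exact le_of_mul_le_mul_right this hnpos
      have h4 : Real.exp x * m' ≤ M := by
        calc Real.exp x * m' ≤ Real.exp x * (M * (1 - x)) := by
              exact mul_le_mul_of_nonneg_left h3 (Real.exp_pos x).le
          _ = M * (Real.exp x * (1 - x)) := by ring
          _ ≤ M * 1 := mul_le_mul_of_nonneg_left hexp2 (by linarith)
          _ = M := mul_one M
      have h5 : Real.exp x ≤ M / m' := by
        rw [le_div_iff₀ (by linarith : (0:ℝ) < m')]
        exact h4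
      have h6 : x ≤ Real.log (M / m') := by
        rw [Real.le_log_iff_exp_le (by positivity)]
        exact h5
      have h7 : Real.log (M / m') = Real.log M - Real.log m' :=
        Real.log_div (by linarith) (by linarith)
      have h8 : (1:ℝ) ≤ nR / a * (Real.log M - Real.log m') := by
        have h9 : nR / a * x ≤ nR / a * (Real.log M - Real.log m') := by
          rw [h7] at h6
          exact mul_le_mul_of_nonneg_left h6 (by positivity)
        have h10 : nR / a * x = 1 := by
          rw [hxdef]
          field_simp
        linarith
      have hBcard : ((insert v B').card : ℝ) ≤ (B'.card : ℝ) + 1 := by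
        exact_mod_cast Finset.card_insert_le v B'
      have hfinal : (B'.card : ℝ) ≤ nR / a * Real.log m' + 1 := hB'bound
      calc ((insert v B').card : ℝ) ≤ (B'.card : ℝ) + 1 := hBcard
        _ ≤ nR / a * Real.log m' + 2 := by linarith
        _ ≤ nR / a * Real.log M + 1 := by
              have hr : nR / a * (Real.log M - Real.log m')
                  = nR / a * Real.log M - nR / a * Real.log m' := by ring
              linarith [h8]
        _ = (Fintype.card V : ℝ) / ((L : ℝ) + 1) * Real.log (𝒬.card : ℝ) + 1 := by
              rw [hnRdef, hadef, hMdef]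

end DSO
/-- Under the unique-shortest-paths assumption, if `𝒟_f ≠ ∅` then there is
a set `B ⊆ V` intersecting every path of `𝒟_f` with `|B| ≤ (n/L)·ln(n²·(2L+2)^f) + 1`. -/
theorem stmt16 {V : Type*} [Fintype V] [DecidableEq V]
    (E : V → V → Prop) (w : V → V → ℝ) (hw : ∀ a b, 0 ≤ w a b)
    (n : ℕ) (hn : Fintype.card V = n)
    (f L : ℕ) (hf : 1 ≤ f) (hL : 1 ≤ L)
    (huniq : ∀ (u x : V) (F : Set (V ⊕ V × V)), F.Finite → F.ncard ≤ f →
      ∀ p q : List V,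
        DSO.IsFWalk E F p u x → ENNReal.ofReal (DSO.wt w p) = DSO.fdist E w F u x →
        DSO.IsFWalk E F q u x → ENNReal.ofReal (DSO.wt w q) = DSO.fdist E w F u x →
        p = q)
    (huniqL : ∀ (u x : V) (F : Set (V ⊕ V × V)), F.Finite → F.ncard ≤ f → ∀ L' : ℕ,
      ∀ p q : List V,
        DSO.IsFWalk E F p u x → DSO.pathLen p ≤ L' →
          ENNReal.ofReal (DSO.wt w p) = DSO.fdistL E w F L' u x →
        DSO.IsFWalk E F q u x → DSO.pathLen q ≤ L' →
          ENNReal.ofReal (DSO.wt w q) = DSO.fdistL E w F L' u x →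
        p = q)
    (hne : (DSO.Dfam E w f L).Nonempty) :
    ∃ B : Finset V, (∀ Q ∈ DSO.Dfam E w f L, ∃ x ∈ Q, x ∈ B) ∧
      (B.card : ℝ) ≤ ((n : ℝ) / (L : ℝ)) *
        Real.log ((n : ℝ) ^ 2 * (2 * (L : ℝ) + 2) ^ f) + 1 := by
  classical
  have hfin : (DSO.Dfam E w f L).Finite := DSO.Dfam_finite hw
  set 𝒬 : Finset (List V) := hfin.toFinset with h𝒬
  have hmem : ∀ Q, Q ∈ 𝒬 ↔ Q ∈ DSO.Dfam E w f L := fun Q => hfin.mem_toFinset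
  have hcond : ∀ Q ∈ 𝒬, L + 1 ≤ Q.toFinset.card := by
    intro Q hQm
    have hQD := (hmem Q).1 hQm
    have hnd := DSO.Dfam_nodup hw huniqL hQD
    have hlen := DSO.Dfam_length hw hQD
    rw [List.toFinset_card_of_nodup hnd, hlen]
  obtain ⟨B, hhit, hbound⟩ := DSO.greedy_cover L 𝒬.card 𝒬 le_rfl hcond
  have h𝒬ne : 𝒬 ≠ ∅ := by
    obtain ⟨Q₀, hQ₀⟩ := hne
    exact Finset.ne_empty_of_mem ((hmem Q₀).2 hQ₀)
  rcases hbound with h | hbound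
  · exact absurd h h𝒬ne
  refine ⟨B, fun Q hQD => hhit Q ((hmem Q).2 hQD), ?_⟩
  have hn0 : 0 < n := by
    obtain ⟨Q₀, hQ₀⟩ := hne
    obtain ⟨s, t, F, Pst, _, _, _, _, _, _, hQne⟩ := hQ₀
    rcases Q₀ with _ | ⟨x, _⟩
    · exact absurd rfl hQne
    · rw [← hn]
      exact Fintype.card_pos_iff.2 ⟨x⟩
  have hcard1 : 1 ≤ 𝒬.card := Finset.card_pos.2 (Finset.nonempty_of_ne_empty h𝒬ne)
  have hDcard : 𝒬.card = (DSO.Dfam E w f L).ncard :=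
    (Set.ncard_eq_toFinset_card _ hfin).symm
  have hcount : 𝒬.card ≤ n * n * (2 * L + 2) ^ f := by
    rw [hDcard]
    have := DSO.Dfam_ncard (E := E) (L := L) hw huniqL
    rwa [hn] at this
  have hle : ((𝒬.card : ℕ) : ℝ) ≤ (n : ℝ) ^ 2 * (2 * (L : ℝ) + 2) ^ f := by
    calc ((𝒬.card : ℕ) : ℝ) ≤ ((n * n * (2 * L + 2) ^ f : ℕ) : ℝ) := by exact_mod_cast hcount
      _ = (n : ℝ) ^ 2 * (2 * (L : ℝ) + 2) ^ f := by push_cast; ring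
  have hlogle : Real.log (𝒬.card : ℝ) ≤ Real.log ((n : ℝ) ^ 2 * (2 * (L : ℝ) + 2) ^ f) :=
    Real.log_le_log (by exact_mod_cast hcard1) hle
  have hlog0 : 0 ≤ Real.log (𝒬.card : ℝ) := Real.log_nonneg (by exact_mod_cast hcard1)
  have hcoef : (Fintype.card V : ℝ) / ((L : ℝ) + 1) ≤ (n : ℝ) / (L : ℝ) := by
    rw [hn]
    refine div_le_div_of_nonneg_left (by positivity) ?_ (by linarith)
    exact_mod_cast hL
  calc (B.card : ℝ) ≤ (Fintype.card V : ℝ) / ((L : ℝ) + 1) * Real.log (𝒬.card : ℝ) + 1 := hbound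
    _ ≤ (n : ℝ) / (L : ℝ) * Real.log ((n : ℝ) ^ 2 * (2 * (L : ℝ) + 2) ^ f) + 1 := by
        have hmul := mul_le_mul hcoef hlogle hlog0 (by positivity)
        linarith
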